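/- Let 𝔤 be a finite-dimensional real Lie algebra equipped with a positive-definite invariant symmetric bilinear form B, and suppose 𝔤 is perfect, i.e. ⁅𝔤,𝔤⁆ = 𝔤. Then the Killing form of 𝔤 is negative definite; in particular, 𝔤 is a semisimple Lie algebra of compact type. -/

import Mathlib

/-- A perfect finite-dimensional real Lie algebra with a positive-definite
invariant symmetric bilinear form has negative-definite Killing form; in
particular it is a semisimple Lie algebra of compact type. -/
theorem killing_negdef_of_perfect
    (L : Type*) [LieRing L] [LieAlgebra ℝ L] [FiniteDimensional ℝ L]
    (B : L →ₗ[ℝ] L →ₗ[ℝ] ℝ)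
    (hsymm : ∀ x y : L, B x y = B y x)
    (hinv : ∀ x y z : L, B ⁅x, y⁆ z = B x ⁅y, z⁆)
    (hpos : ∀ x : L, x ≠ 0 → 0 < B x x)
    (hperfect : ⁅(⊤ : LieIdeal ℝ L), (⊤ : LieIdeal ℝ L)⁆ = ⊤) :
    (∀ x : L, x ≠ 0 → killingForm ℝ L x x < 0) ∧ LieAlgebra.IsSemisimple ℝ L := by
  classical
  have hposle : ∀ x : L, 0 ≤ B x x := by
    intro x
    rcases eq_or_ne x 0 with rfl | h
    · simp
    · exact (hpos x h).le
  -- skew-symmetry of ad with respect to B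
  have hskew : ∀ x a b : L, B a ⁅x, b⁆ = - B ⁅x, a⁆ b := by
    intro x a b
    rw [← hinv a x b, ← lie_skew a x, map_neg, LinearMap.neg_apply]
  -- the center is trivial
  have hcenter : ∀ x : L, (∀ y : L, ⁅x, y⁆ = 0) → x = 0 := by
    intro x hx
    by_contra hx0
    have hBy : ∀ y : L, B y x = 0 := by
      intro y
      have hy : y ∈ ⁅(⊤ : LieIdeal ℝ L), (⊤ : LieIdeal ℝ L)⁆ := by
        rw [hperfect]; exact LieSubmodule.mem_top _
      have hy' : y ∈ Submodule.span ℝ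
          {m : L | ∃ (a : ↥(⊤ : LieIdeal ℝ L)) (n : ↥(⊤ : LieIdeal ℝ L)), ⁅(a : L), (n : L)⁆ = m} := by
        rw [← LieSubmodule.lieIdeal_oper_eq_linear_span]; exact hy
      refine Submodule.span_induction ?_ ?_ ?_ ?_ hy'
      · rintro _ ⟨a, b, rfl⟩
        have hbx : ⁅(b : L), x⁆ = 0 := by
          rw [← neg_eq_zero, lie_skew]; exact hx b
        rw [hinv, hbx, map_zero]
      · simp
      · intro a b _ _ ha hb
        rw [map_add, LinearMap.add_apply, ha, hb, add_zero]
      · intro c a _ ha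
        rw [map_smul, LinearMap.smul_apply, ha, smul_zero]
    exact hx0.elim <| by
      have := hpos x hx0
      rw [hBy x] at this
      exact absurd this (lt_irrefl 0)
  -- orthogonal basis for B
  have hBsymm : B.IsSymm := ⟨fun x y => hsymm x y⟩
  obtain ⟨v, hv⟩ := LinearMap.BilinForm.exists_orthogonal_basis hBsymm
  have hvne : ∀ i, v i ≠ 0 := fun i => v.ne_zero i
  have hd : ∀ i, 0 < B (v i) (v i) := fun i => hpos _ (hvne i)
  -- coordinate formula
  have hrepr : ∀ (x : L) (i), v.repr x i = B (v i) x / B (v i) (v i) := by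
    intro x i
    have : B (v i) x = v.repr x i * B (v i) (v i) := by
      conv_lhs => rw [← Module.Basis.sum_repr v x]
      rw [map_sum]
      rw [Finset.sum_eq_single i]
      · rw [map_smul, smul_eq_mul]
      · intro j _ hj
        rw [map_smul, smul_eq_mul, hv (Ne.symm hj), mul_zero]
      · intro h; exact absurd (Finset.mem_univ i) h
    rw [this, mul_div_assoc, div_self (hd i).ne', mul_one]
  -- trace formula
  have htrace : ∀ f : Module.End ℝ L,
      LinearMap.trace ℝ L f = ∑ i, B (v i) (f (v i)) / B (v i) (v i) := by
    intro f
    rw [LinearMap.trace_eq_matrix_trace ℝ v f, Matrix.trace]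
    refine Finset.sum_congr rfl fun i _ => ?_
    rw [Matrix.diag_apply, LinearMap.toMatrix_apply, hrepr]
  -- the Killing form formula
  have hkill : ∀ x : L, killingForm ℝ L x x
      = ∑ i, -(B ⁅x, v i⁆ ⁅x, v i⁆ / B (v i) (v i)) := by
    intro x
    rw [killingForm_apply_apply, htrace]
    refine Finset.sum_congr rfl fun i _ => ?_
    have : ((LieAlgebra.ad ℝ L x ∘ₗ LieAlgebra.ad ℝ L x) (v i)) = ⁅x, ⁅x, v i⁆⁆ := rfl
    rw [this, hskew x (v i) ⁅x, v i⁆, neg_div]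
  -- negative definiteness
  have hneg : ∀ x : L, x ≠ 0 → killingForm ℝ L x x < 0 := by
    intro x hx
    rw [hkill]
    have hterm : ∀ i, -(B ⁅x, v i⁆ ⁅x, v i⁆ / B (v i) (v i)) ≤ 0 := by
      intro i
      have := div_nonneg (hposle ⁅x, v i⁆) (hd i).le
      linarith
    -- some basis bracket is nonzero
    have hex : ∃ i, ⁅x, v i⁆ ≠ 0 := by
      by_contra h
      push_neg at h
      apply hx
      apply hcenter
      intro y
      have : LieAlgebra.ad ℝ L x = 0 := by
        apply Module.Basis.ext v
        intro i
        simpa using h i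
      have := LinearMap.congr_fun this y
      simpa using this
    obtain ⟨i, hi⟩ := hex
    have hlt : -(B ⁅x, v i⁆ ⁅x, v i⁆ / B (v i) (v i)) < 0 := by
      have := div_pos (hpos _ hi) (hd i)
      linarith
    calc ∑ j, -(B ⁅x, v j⁆ ⁅x, v j⁆ / B (v j) (v j)) < ∑ _j : Fin (Module.finrank ℝ L), (0:ℝ) := by
            refine Finset.sum_lt_sum (fun j _ => hterm j) ⟨i, Finset.mem_univ i, hlt⟩
      _ = 0 := by simp
  refine ⟨hneg, ?_⟩
  have : LieAlgebra.IsKilling ℝ L := by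
    constructor
    rw [eq_bot_iff]
    intro x hx
    rw [LieIdeal.mem_killingCompl] at hx
    have hxx : killingForm ℝ L x x = 0 := hx x trivial
    rw [LieSubmodule.mem_bot]
    by_contra h
    exact absurd hxx (ne_of_lt (hneg x h))
  infer_instance
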